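/- Let k be a field of characteristic zero, L a Lie algebra over k, U its universal enveloping algebra and ι : L → U the canonical map. For an element a = Σ_i a_i ⊗ b_i ∈ L ⊗ L and indices 1 ≤ i < j ≤ 3, write a^{ij} for the element of U ⊗ U ⊗ U obtained by placing ι(a_i) in tensor slot i, ι(b_i) in tensor slot j, and 1 in the remaining slot. Suppose t ∈ L ⊗ L is invariant under the diagonal adjoint action, i.e., for every x ∈ L one has (ad x ⊗ id + id ⊗ ad x)(t) = 0 in L ⊗ L, and suppose f ∈ L ⊗ L is antisymmetric, i.e., the flip map sends f to −f. Then in U ⊗ U ⊗ U the sum of mixed commutators vanishes: [t^{12}, f^{13}] + [t^{12}, f^{23}] + [t^{13}, f^{23}] + [f^{12}, t^{13}] + [f^{12}, t^{23}] + [f^{13}, t^{23}] = 0. Consequently CYB(t + f) = CYB(t) + CYB(f), where CYB(r) := [r^{12}, r^{13}] + [r^{12}, r^{23}] + [r^{13}, r^{23}]. -/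

import Mathlib

open scoped TensorProduct

namespace QuasiLieBialgebraTwist

variable (k : Type*) [Field k] [CharZero k]
variable (L : Type*) [LieRing L] [LieAlgebra k L]

/-- The universal enveloping algebra of `L`, abbreviated. -/
local notation "U" => UniversalEnvelopingAlgebra k L

attribute [local instance 100] LieRing.ofAssociativeRing

/-- The canonical map `ι : L → U` as a `k`-linear map. -/
noncomputable def iota : L →ₗ[k] UniversalEnvelopingAlgebra k L :=
  (UniversalEnvelopingAlgebra.ι k).toLinearMap

/-- `a = Σ aᵢ ⊗ bᵢ ↦ Σ ι(aᵢ) ⊗ ι(bᵢ) ⊗ 1`, placement in tensor slots `1, 2` of `U ⊗ U ⊗ U`. -/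
noncomputable def ins12 : L ⊗[k] L →ₗ[k]
    (UniversalEnvelopingAlgebra k L ⊗[k]
      (UniversalEnvelopingAlgebra k L ⊗[k] UniversalEnvelopingAlgebra k L)) :=
  (TensorProduct.map LinearMap.id
      ((TensorProduct.mk k (UniversalEnvelopingAlgebra k L)
        (UniversalEnvelopingAlgebra k L)).flip 1)).comp
    (TensorProduct.map (iota k L) (iota k L))

/-- `a = Σ aᵢ ⊗ bᵢ ↦ Σ ι(aᵢ) ⊗ 1 ⊗ ι(bᵢ)`, placement in tensor slots `1, 3` of `U ⊗ U ⊗ U`. -/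
noncomputable def ins13 : L ⊗[k] L →ₗ[k]
    (UniversalEnvelopingAlgebra k L ⊗[k]
      (UniversalEnvelopingAlgebra k L ⊗[k] UniversalEnvelopingAlgebra k L)) :=
  (TensorProduct.map LinearMap.id
      (TensorProduct.mk k (UniversalEnvelopingAlgebra k L)
        (UniversalEnvelopingAlgebra k L) 1)).comp
    (TensorProduct.map (iota k L) (iota k L))

/-- `a = Σ aᵢ ⊗ bᵢ ↦ Σ 1 ⊗ ι(aᵢ) ⊗ ι(bᵢ)`, placement in tensor slots `2, 3` of `U ⊗ U ⊗ U`. -/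
noncomputable def ins23 : L ⊗[k] L →ₗ[k]
    (UniversalEnvelopingAlgebra k L ⊗[k]
      (UniversalEnvelopingAlgebra k L ⊗[k] UniversalEnvelopingAlgebra k L)) :=
  (TensorProduct.mk k (UniversalEnvelopingAlgebra k L)
      (UniversalEnvelopingAlgebra k L ⊗[k] UniversalEnvelopingAlgebra k L) 1).comp
    (TensorProduct.map (iota k L) (iota k L))

/-- The commutator `[a, b] = a * b - b * a` in an associative ring. -/
def comm {A : Type*} [Ring A] (a b : A) : A := a * b - b * a

/-- The left-hand side of the classical Yang–Baxter equation,
`CYB(r) = [r¹², r¹³] + [r¹², r²³] + [r¹³, r²³]`, an element of `U ⊗ U ⊗ U`. -/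
noncomputable def CYB (r : L ⊗[k] L) :
    UniversalEnvelopingAlgebra k L ⊗[k]
      (UniversalEnvelopingAlgebra k L ⊗[k] UniversalEnvelopingAlgebra k L) :=
  comm (ins12 k L r) (ins13 k L r) + comm (ins12 k L r) (ins23 k L r)
    + comm (ins13 k L r) (ins23 k L r)


/-! ### Auxiliary lemmas -/

@[simp] lemma comm_add_left' {A : Type*} [Ring A] (a b c : A) :
    comm (a + b) c = comm a c + comm b c := by
  simp only [comm]; noncomm_ring

@[simp] lemma comm_add_right' {A : Type*} [Ring A] (a b c : A) :
    comm a (b + c) = comm a b + comm a c := by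
  simp only [comm]; noncomm_ring

@[simp] lemma comm_zero_left' {A : Type*} [Ring A] (a : A) : comm 0 a = 0 := by
  simp [comm]

@[simp] lemma comm_zero_right' {A : Type*} [Ring A] (a : A) : comm a 0 = 0 := by
  simp [comm]

@[simp] lemma comm_neg_left' {A : Type*} [Ring A] (a b : A) : comm (-a) b = -comm a b := by
  simp only [comm]; noncomm_ring

@[simp] lemma comm_neg_right' {A : Type*} [Ring A] (a b : A) : comm a (-b) = -comm a b := by
  simp only [comm]; noncomm_ring

lemma iota_bracket (x y : L) :
    iota k L ⁅x, y⁆ = iota k L x * iota k L y - iota k L y * iota k L x := by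
  simp [iota, Ring.lie_def]

@[simp] lemma ins12_tmul (u v : L) :
    ins12 k L (u ⊗ₜ[k] v) = iota k L u ⊗ₜ (iota k L v ⊗ₜ (1 : U)) := rfl

@[simp] lemma ins13_tmul (u v : L) :
    ins13 k L (u ⊗ₜ[k] v) = iota k L u ⊗ₜ ((1 : U) ⊗ₜ iota k L v) := rfl

@[simp] lemma ins23_tmul (u v : L) :
    ins23 k L (u ⊗ₜ[k] v) = (1 : U) ⊗ₜ (iota k L u ⊗ₜ iota k L v) := rfl

lemma pairA (a b : L) (t : L ⊗[k] L) :
    comm (ins12 k L t) (ins13 k L (a ⊗ₜ[k] b)) + comm (ins12 k L t) (ins23 k L (a ⊗ₜ[k] b))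
      = - (ins12 k L ((TensorProduct.map (LieAlgebra.ad k L a : L →ₗ[k] L) (LinearMap.id : L →ₗ[k] L)
            + TensorProduct.map (LinearMap.id : L →ₗ[k] L) (LieAlgebra.ad k L a : L →ₗ[k] L)) t)
          * ((1 : U) ⊗ₜ ((1 : U) ⊗ₜ iota k L b))) := by
  induction t using TensorProduct.induction_on with
  | zero => simp
  | tmul u v =>
    simp only [ins12_tmul, ins13_tmul, ins23_tmul, LinearMap.add_apply,
      TensorProduct.map_tmul, LinearMap.id_coe, id_eq, LieAlgebra.ad_apply, map_add,
      iota_bracket, comm, Algebra.TensorProduct.tmul_mul_tmul, one_mul, mul_one,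
      TensorProduct.sub_tmul, TensorProduct.tmul_sub, TensorProduct.add_tmul,
      TensorProduct.tmul_add, add_mul, sub_mul]
    abel
  | add x y hx hy =>
    simp only [map_add, comm_add_left', add_mul, neg_add]
    rw [add_add_add_comm, hx, hy]

lemma pairB (a b : L) (t : L ⊗[k] L) :
    comm (ins12 k L (a ⊗ₜ[k] b)) (ins23 k L t) + comm (ins13 k L (a ⊗ₜ[k] b)) (ins23 k L t)
      = (iota k L a ⊗ₜ ((1 : U) ⊗ₜ (1 : U)))
          * ins23 k L ((TensorProduct.map (LieAlgebra.ad k L b : L →ₗ[k] L) (LinearMap.id : L →ₗ[k] L)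
            + TensorProduct.map (LinearMap.id : L →ₗ[k] L) (LieAlgebra.ad k L b : L →ₗ[k] L)) t) := by
  induction t using TensorProduct.induction_on with
  | zero => simp
  | tmul u v =>
    simp only [ins12_tmul, ins13_tmul, ins23_tmul, LinearMap.add_apply,
      TensorProduct.map_tmul, LinearMap.id_coe, id_eq, LieAlgebra.ad_apply, map_add,
      iota_bracket, comm, Algebra.TensorProduct.tmul_mul_tmul, one_mul, mul_one,
      TensorProduct.sub_tmul, TensorProduct.tmul_sub, TensorProduct.add_tmul,
      TensorProduct.tmul_add, mul_add, mul_sub]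
  | add x y hx hy =>
    simp only [map_add, comm_add_right', mul_add]
    rw [add_add_add_comm, hx, hy]

/-- Auxiliary symmetric expression appearing in the middle-pair computation. -/
noncomputable def Dmap (a b : L) : L ⊗[k] L →ₗ[k]
    (UniversalEnvelopingAlgebra k L ⊗[k]
      (UniversalEnvelopingAlgebra k L ⊗[k] UniversalEnvelopingAlgebra k L)) :=
  TensorProduct.map
    ((LinearMap.mulLeft k (iota k L a) - LinearMap.mulRight k (iota k L a)).comp (iota k L))
    ((TensorProduct.mk k U U (iota k L b)).comp (iota k L))

@[simp] lemma Dmap_tmul (a b u v : L) :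
    Dmap k L a b (u ⊗ₜ[k] v)
      = (iota k L a * iota k L u - iota k L u * iota k L a) ⊗ₜ (iota k L b ⊗ₜ iota k L v) := by
  simp [Dmap]

lemma pairC (a b : L) (t : L ⊗[k] L) :
    comm (ins13 k L t) (ins23 k L (a ⊗ₜ[k] b)) + comm (ins12 k L (a ⊗ₜ[k] b)) (ins13 k L t)
      + ((1 : U) ⊗ₜ (iota k L a ⊗ₜ (1 : U)))
          * ins13 k L ((TensorProduct.map (LieAlgebra.ad k L b : L →ₗ[k] L) (LinearMap.id : L →ₗ[k] L)
            + TensorProduct.map (LinearMap.id : L →ₗ[k] L) (LieAlgebra.ad k L b : L →ₗ[k] L)) t)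
      = Dmap k L a b t + Dmap k L b a t := by
  induction t using TensorProduct.induction_on with
  | zero => simp
  | tmul u v =>
    simp only [ins12_tmul, ins13_tmul, ins23_tmul, LinearMap.add_apply,
      TensorProduct.map_tmul, LinearMap.id_coe, id_eq, LieAlgebra.ad_apply, map_add,
      iota_bracket, comm, Algebra.TensorProduct.tmul_mul_tmul, one_mul, mul_one,
      TensorProduct.sub_tmul, TensorProduct.tmul_sub, TensorProduct.add_tmul,
      TensorProduct.tmul_add, mul_add, mul_sub, Dmap_tmul]
    abel
  | add x y hx hy =>
    simp only [map_add, comm_add_left', comm_add_right', mul_add]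
    rw [show ∀ A B C D E F : UniversalEnvelopingAlgebra k L ⊗[k]
        (UniversalEnvelopingAlgebra k L ⊗[k] UniversalEnvelopingAlgebra k L),
        A + B + (C + D) + (E + F) = (A + C + E) + (B + D + F) from fun _ _ _ _ _ _ => by abel,
      hx, hy]
    abel

/-- If `t ∈ L ⊗ L` is invariant under the diagonal adjoint action and
`f ∈ L ⊗ L` is antisymmetric, then inside `U ⊗ U ⊗ U` the sum of the mixed commutators
`[t¹², f¹³] + [t¹², f²³] + [t¹³, f²³] + [f¹², t¹³] + [f¹², t²³] + [f¹³, t²³]` vanishes;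
consequently `CYB(t + f) = CYB(t) + CYB(f)`. -/
theorem mixed_cyb_terms_vanish (t f : L ⊗[k] L)
    (ht : ∀ x : L,
      (TensorProduct.map (LieAlgebra.ad k L x : L →ₗ[k] L) (LinearMap.id : L →ₗ[k] L)
        + TensorProduct.map (LinearMap.id : L →ₗ[k] L) (LieAlgebra.ad k L x : L →ₗ[k] L)) t = 0)
    (hf : TensorProduct.comm k L L f = -f) :
    comm (ins12 k L t) (ins13 k L f) + comm (ins12 k L t) (ins23 k L f)
        + comm (ins13 k L t) (ins23 k L f) + comm (ins12 k L f) (ins13 k L t)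
        + comm (ins12 k L f) (ins23 k L t) + comm (ins13 k L f) (ins23 k L t) = 0 ∧
      CYB k L (t + f) = CYB k L t + CYB k L f := by
  have hA : ∀ g : L ⊗[k] L,
      comm (ins12 k L t) (ins13 k L g) + comm (ins12 k L t) (ins23 k L g) = 0 := by
    intro g
    induction g using TensorProduct.induction_on with
    | zero => simp
    | tmul a b => rw [pairA, ht a]; simp
    | add x y hx hy =>
      simp only [map_add, comm_add_right']
      rw [add_add_add_comm, hx, hy, add_zero]
  have hB : ∀ g : L ⊗[k] L,
      comm (ins12 k L g) (ins23 k L t) + comm (ins13 k L g) (ins23 k L t) = 0 := by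
    intro g
    induction g using TensorProduct.induction_on with
    | zero => simp
    | tmul a b => rw [pairB, ht b]; simp
    | add x y hx hy =>
      simp only [map_add, comm_add_left']
      rw [add_add_add_comm, hx, hy, add_zero]
  have hCpure : ∀ a b : L,
      comm (ins13 k L t) (ins23 k L (a ⊗ₜ[k] b)) + comm (ins12 k L (a ⊗ₜ[k] b)) (ins13 k L t)
        = Dmap k L a b t + Dmap k L b a t := by
    intro a b
    have h := pairC k L a b t
    rw [ht b] at h
    simpa using h
  have hCflip : ∀ g : L ⊗[k] L,
      comm (ins13 k L t) (ins23 k L g) + comm (ins12 k L g) (ins13 k L t)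
        = comm (ins13 k L t) (ins23 k L (TensorProduct.comm k L L g))
          + comm (ins12 k L (TensorProduct.comm k L L g)) (ins13 k L t) := by
    intro g
    induction g using TensorProduct.induction_on with
    | zero => simp
    | tmul a b =>
      rw [TensorProduct.comm_tmul, hCpure a b, hCpure b a]
      abel
    | add x y hx hy =>
      simp only [map_add, comm_add_left', comm_add_right']
      rw [add_add_add_comm, hx, hy]
      abel
  have hC : comm (ins13 k L t) (ins23 k L f) + comm (ins12 k L f) (ins13 k L t) = 0 := by
    have h1 := hCflip f
    rw [hf] at h1
    simp only [map_neg, comm_neg_left', comm_neg_right'] at h1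
    have h2 : (2 : k) • (comm (ins13 k L t) (ins23 k L f)
        + comm (ins12 k L f) (ins13 k L t)) = 0 := by
      rw [two_smul]
      nth_rewrite 1 [h1]
      abel
    rcases smul_eq_zero.mp h2 with h | h
    · exact absurd h two_ne_zero
    · exact h
  have hsum : comm (ins12 k L t) (ins13 k L f) + comm (ins12 k L t) (ins23 k L f)
        + comm (ins13 k L t) (ins23 k L f) + comm (ins12 k L f) (ins13 k L t)
        + comm (ins12 k L f) (ins23 k L t) + comm (ins13 k L f) (ins23 k L t) = 0 := by
    calc comm (ins12 k L t) (ins13 k L f) + comm (ins12 k L t) (ins23 k L f)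
          + comm (ins13 k L t) (ins23 k L f) + comm (ins12 k L f) (ins13 k L t)
          + comm (ins12 k L f) (ins23 k L t) + comm (ins13 k L f) (ins23 k L t)
        = (comm (ins12 k L t) (ins13 k L f) + comm (ins12 k L t) (ins23 k L f))
          + (comm (ins13 k L t) (ins23 k L f) + comm (ins12 k L f) (ins13 k L t))
          + (comm (ins12 k L f) (ins23 k L t) + comm (ins13 k L f) (ins23 k L t)) := by abel
      _ = 0 := by rw [hA f, hC, hB f]; simp
  refine ⟨hsum, ?_⟩
  simp only [CYB, map_add, comm_add_left', comm_add_right']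
  rw [← sub_eq_zero, ← hsum]
  abel

end QuasiLieBialgebraTwist
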